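/- The conclusion of the main theorem fails without the positivity-at-infinity assumption: for g₁ = (1 − X²)³ ∈ ℝ[X,Y] and f = (1 − X²)Y² + 1, the polynomial f is strictly positive on S = [−1,1] × ℝ and the quadratic module M(g₁) contains 4/3 − X², yet for no non-constant q ∈ ℝ[Y] positive on ℝ and no M ∈ ℤ_{≥0} does q^M f belong to M(g₁). -/

import Mathlib

open Polynomial

/-- Membership in the quadratic module generated by a single element `g`:
`p = σ₀ + σ₁ * g` with `σ₀, σ₁` sums of squares. -/
def QuadMod1 {R : Type*} [CommRing R] (g p : R) : Prop :=
  ∃ σ₀ σ₁ : R, IsSumSq σ₀ ∧ IsSumSq σ₁ ∧ p = σ₀ + σ₁ * g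

/-- `g₁ = (1 - X²)³` viewed in `ℝ[X][Y]` (inner variable `X`, outer variable `Y`). -/
noncomputable def gEx : Polynomial (Polynomial ℝ) := (1 - C X ^ 2) ^ 3

/-- `f = (1 - X²)Y² + 1` in `ℝ[X][Y]`. -/
noncomputable def fEx : Polynomial (Polynomial ℝ) := (1 - C X ^ 2) * X ^ 2 + 1

lemma part1 : (∀ x y : ℝ, -1 ≤ x → x ≤ 1 →
      0 < Polynomial.eval₂ (Polynomial.evalRingHom x) y fEx) := by
  intro x y hx1 hx2
  rw [fEx]
  simp only [eval₂_add, eval₂_mul, eval₂_one, eval₂_X, eval₂_pow, eval₂_sub, eval₂_C,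
    coe_evalRingHom, eval_X]
  nlinarith [sq_nonneg y, mul_nonneg (mul_nonneg (sub_nonneg.2 hx2) (by linarith : (0:ℝ) ≤ 1 + x)) (sq_nonneg y)]


lemma inner_id :
    (Polynomial.C (4 / 3 : ℝ) - X ^ 2) =
      ((C (2/3 : ℝ) * X ^ 3 - X) ^ 2 + ((C (2/3 : ℝ) * X ^ 3 - X) ^ 2 + ((C (2/3 : ℝ) * X ^ 3 - X) ^ 2 + 0)))
      + ((C (2/3 : ℝ)) ^ 2 + ((C (2/3 : ℝ)) ^ 2 + ((C (2/3 : ℝ)) ^ 2 + 0))) * (1 - X ^ 2) ^ 3 := by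
  apply Polynomial.funext
  intro r
  simp only [eval_add, eval_mul, eval_pow, eval_sub, eval_C, eval_X, eval_one, eval_zero]
  ring

lemma part2 : QuadMod1 gEx (C (Polynomial.C (4 / 3 : ℝ) - X ^ 2)) := by
  set u : Polynomial (Polynomial ℝ) := C (C (2/3 : ℝ) * X ^ 3 - X) with hu
  set c : Polynomial (Polynomial ℝ) := C (C (2/3 : ℝ)) with hc
  refine ⟨u^2 + (u^2 + (u^2 + 0)), c^2 + (c^2 + (c^2 + 0)), ?_, ?_, ?_⟩
  · simp only [sq]
    exact .sq_add _ (.sq_add _ (.sq_add _ .zero))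
  · simp only [sq]
    exact .sq_add _ (.sq_add _ (.sq_add _ .zero))
  · have : gEx = C ((1 - X ^ 2) ^ 3) := by simp [gEx]
    rw [this, hu, hc, inner_id]
    simp only [map_add, map_mul, map_pow, map_zero]


lemma isSumSq_fin {R : Type*} [CommRing R] {s : R} (h : IsSumSq s) :
    ∃ n, ∃ f : Fin n → R, s = ∑ i, f i ^ 2 := by
  induction h with
  | zero => exact ⟨0, ![], by simp⟩
  | sq_add a _ ih =>
    obtain ⟨n, f, rfl⟩ := ih
    refine ⟨n + 1, Fin.cons a f, ?_⟩
    rw [Fin.sum_univ_succ]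
    simp [sq]

lemma coeff_sq_two_mul {R : Type*} [CommRing R] (p : R[X]) {N : ℕ} (h : p.natDegree ≤ N) :
    (p ^ 2).coeff (2 * N) = (p.coeff N) ^ 2 := by
  rcases lt_or_eq_of_le h with h | h
  · rw [coeff_eq_zero_of_natDegree_lt h, coeff_eq_zero_of_natDegree_lt
      (lt_of_le_of_lt natDegree_pow_le (by omega)), zero_pow two_ne_zero]
  · subst h
    rw [sq, two_mul, coeff_mul_degree_add_degree, ← sq]
    rfl

noncomputable def D1 (p : Polynomial (Polynomial ℝ)) : Polynomial ℝ :=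
  ∑ k ∈ p.support, Polynomial.C ((Polynomial.derivative (p.coeff k)).eval 1) * Polynomial.X ^ k

lemma D1_natDegree_le (p : Polynomial (Polynomial ℝ)) : (D1 p).natDegree ≤ p.natDegree := by
  refine natDegree_sum_le_of_forall_le _ _ (fun k hk => ?_)
  refine natDegree_mul_le.trans ?_
  simp only [natDegree_C, natDegree_pow, natDegree_X, zero_add, mul_one]
  exact le_natDegree_of_mem_supp k hk

lemma D1_eval (p : Polynomial (Polynomial ℝ)) (y : ℝ) :
    (Polynomial.derivative (p.eval (Polynomial.C y))).eval 1 = (D1 p).eval y := by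
  conv_lhs => rw [p.as_sum_support]
  rw [eval_finset_sum, map_sum, eval_finset_sum, D1, eval_finset_sum]
  refine Finset.sum_congr rfl (fun k hk => ?_)
  simp only [eval_monomial, ← C_pow, derivative_mul, derivative_C, mul_zero, add_zero,
    eval_mul, eval_C, eval_pow, eval_X, zero_mul, zero_add]

lemma part3 : ∀ q : Polynomial ℝ, 0 < q.natDegree → (∀ y : ℝ, 0 < q.eval y) →
    ∀ M : ℕ, ¬ QuadMod1 gEx ((q.map Polynomial.C) ^ M * fEx) := by
  rintro q hqdeg hqpos M ⟨s0, s1, h0, h1, heq⟩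
  obtain ⟨n, P, rfl⟩ := isSumSq_fin h0
  obtain ⟨m, R, rfl⟩ := isSumSq_fin h1
  have hq0 : q ≠ 0 := fun h => by simpa [h] using hqpos 0
  set d := q.natDegree with hd
  have hg : gEx = C ((1 - X ^ 2) ^ 3 : Polynomial ℝ) := by simp [gEx]
  rw [hg] at heq
  -- degree bound on the LHS
  have hfdeg : fEx.natDegree ≤ 2 := by
    rw [fEx]
    compute_degree
  have hLdeg : ((q.map Polynomial.C : Polynomial (Polynomial ℝ)) ^ M * fEx).natDegree
      ≤ M * d + 2 := by
    refine natDegree_mul_le.trans (add_le_add ?_ hfdeg)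
    exact natDegree_pow_le.trans (Nat.mul_le_mul_left M natDegree_map_le)
  -- uniform degree bound on the P i
  set N : ℕ := max (Finset.univ.sup fun i => (P i).natDegree)
      (Finset.univ.sup fun j => (R j).natDegree) with hN
  have hPN : ∀ i, (P i).natDegree ≤ N := fun i =>
    le_trans (Finset.le_sup (f := fun i => (P i).natDegree) (Finset.mem_univ i)) (le_max_left _ _)
  have hRN : ∀ j, (R j).natDegree ≤ N := fun j =>
    le_trans (Finset.le_sup (f := fun j => (R j).natDegree) (Finset.mem_univ j)) (le_max_right _ _)
  have h2N : 2 * N ≤ M * d + 2 := by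
    by_contra hlt
    push_neg at hlt
    have hNpos : 0 < N := by omega
    have hco := congrArg (fun p => Polynomial.coeff p (2 * N)) heq
    simp only [coeff_add, finset_sum_coeff, coeff_mul_C] at hco
    rw [coeff_eq_zero_of_natDegree_lt (lt_of_le_of_lt hLdeg hlt),
      Finset.sum_congr rfl (fun i _ => coeff_sq_two_mul (P i) (hPN i)),
      Finset.sum_congr rfl (fun j _ => coeff_sq_two_mul (R j) (hRN j))] at hco
    -- hco : 0 = ∑ (P i).coeff N ^ 2 + (∑ (R j).coeff N ^ 2) * (1 - X^2)^3
    have hzero : ∀ t : ℝ, t ∈ Set.Ioo (-1:ℝ) 1 →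
        (∀ i, ((P i).coeff N).eval t = 0) ∧ (∀ j, ((R j).coeff N).eval t = 0) := by
      intro t ht
      have h1t : 0 < (1 - t ^ 2) := by nlinarith [ht.1, ht.2]
      have hev := congrArg (Polynomial.eval t) hco
      simp only [eval_add, eval_mul, eval_pow, eval_finset_sum, eval_sub, eval_one, eval_X,
        eval_zero] at hev
      have hA : (0:ℝ) ≤ ∑ i, ((P i).coeff N).eval t ^ 2 :=
        Finset.sum_nonneg fun i _ => sq_nonneg _
      have hB' : (0:ℝ) ≤ ∑ j, ((R j).coeff N).eval t ^ 2 :=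
        Finset.sum_nonneg fun j _ => sq_nonneg _
      have hB : (0:ℝ) ≤ (∑ j, ((R j).coeff N).eval t ^ 2) * (1 - t ^ 2) ^ 3 :=
        mul_nonneg hB' (by positivity)
      have hA0 : ∑ i, ((P i).coeff N).eval t ^ 2 = 0 := by linarith [hev.symm]
      have hB0 : ∑ j, ((R j).coeff N).eval t ^ 2 = 0 := by
        have hg0 : (0:ℝ) < (1 - t ^ 2) ^ 3 := by positivity
        nlinarith [hev.symm]
      constructor
      · intro i
        have := (Finset.sum_eq_zero_iff_of_nonneg (fun i _ => sq_nonneg _)).1 hA0 i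
          (Finset.mem_univ i)
        exact pow_eq_zero_iff two_ne_zero |>.1 this
      · intro j
        have := (Finset.sum_eq_zero_iff_of_nonneg (fun j _ => sq_nonneg _)).1 hB0 j
          (Finset.mem_univ j)
        exact pow_eq_zero_iff two_ne_zero |>.1 this
    have hioo : (Set.Ioo (-1:ℝ) 1).Infinite := Set.Ioo_infinite (by norm_num)
    have hPcoeff : ∀ i, (P i).coeff N = 0 := fun i =>
      Polynomial.eq_zero_of_infinite_isRoot _
        (hioo.mono (fun t ht => (hzero t ht).1 i))
    have hRcoeff : ∀ j, (R j).coeff N = 0 := fun j =>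
      Polynomial.eq_zero_of_infinite_isRoot _
        (hioo.mono (fun t ht => (hzero t ht).2 j))
    have hPlt : ∀ i, (P i).natDegree ≤ N - 1 := by
      intro i
      rcases lt_or_eq_of_le (hPN i) with h | h
      · omega
      · have hz : P i = 0 := leadingCoeff_eq_zero.1 (by rw [leadingCoeff, h]; exact hPcoeff i)
        rw [hz] at h
        simp at h
        omega
    have hRlt : ∀ j, (R j).natDegree ≤ N - 1 := by
      intro j
      rcases lt_or_eq_of_le (hRN j) with h | h
      · omega
      · have hz : R j = 0 := leadingCoeff_eq_zero.1 (by rw [leadingCoeff, h]; exact hRcoeff j)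
        rw [hz] at h
        simp at h
        omega
    have : N ≤ N - 1 :=
      le_trans (le_of_eq hN) (max_le (Finset.sup_le fun i _ => hPlt i)
        (Finset.sup_le fun j _ => hRlt j))
    omega
  have hPdeg : ∀ i, 2 * (P i).natDegree ≤ M * d + 2 := fun i =>
    le_trans (by have := hPN i; omega) h2N
  -- the key pointwise inequality
  have key : ∀ y : ℝ, (y ^ 2 * q.eval y ^ M) ^ 2
      ≤ q.eval y ^ M * (∑ i, ((D1 (P i)).eval y) ^ 2) := by
    intro y
    have hqmap : (q.map (Polynomial.C : ℝ →+* Polynomial ℝ)).eval (Polynomial.C y)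
        = Polynomial.C (q.eval y) := by
      rw [eval_map, eval₂_at_apply]
    have hφ := congrArg (Polynomial.eval (Polynomial.C y : Polynomial ℝ)) heq
    simp only [eval_mul, eval_pow, eval_add, eval_finset_sum, eval_C, hqmap] at hφ
    have hfeval : fEx.eval (Polynomial.C y) = (1 - X ^ 2) * Polynomial.C y ^ 2 + 1 := by
      simp [fEx]
    rw [hfeval] at hφ
    set c : ℝ := q.eval y with hc
    set a : Fin n → ℝ := fun i => ((P i).eval (Polynomial.C y)).eval 1 with ha
    set b : Fin n → ℝ := fun i => (Polynomial.derivative ((P i).eval (Polynomial.C y))).eval 1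
      with hb
    have e1 : ∑ i, a i ^ 2 = c ^ M := by
      have := congrArg (Polynomial.eval (1:ℝ)) hφ
      simp only [eval_add, eval_mul, eval_pow, eval_sub, eval_one, eval_X, eval_C,
        eval_finset_sum] at this
      norm_num at this
      linarith [this]
    have e2 : ∑ i, a i * b i = -(y ^ 2 * c ^ M) := by
      have := congrArg (fun p => (Polynomial.derivative p).eval 1) hφ
      simp only [derivative_mul, derivative_pow, derivative_C, derivative_add, derivative_one,
        derivative_sub, derivative_X, map_sum, eval_add, eval_mul, eval_pow, eval_sub,
        eval_one, eval_X, eval_C, eval_finset_sum, eval_zero, eval_natCast] at this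
      norm_num at this
      have h2 : (2:ℝ) * (∑ i, a i * b i) = -(c ^ M * (2 * y ^ 2)) := by
        rw [Finset.mul_sum, this]
        exact Finset.sum_congr rfl fun i _ => by simp only [ha, hb]; ring
      linarith [h2]
    have cs := Finset.sum_mul_sq_le_sq_mul_sq Finset.univ a b
    rw [e1, e2] at cs
    have hbD : ∀ i, b i = (D1 (P i)).eval y := fun i => D1_eval (P i) y
    calc (y ^ 2 * c ^ M) ^ 2 = (-(y ^ 2 * c ^ M)) ^ 2 := by ring
    _ ≤ c ^ M * ∑ i, b i ^ 2 := cs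
    _ = c ^ M * ∑ i, ((D1 (P i)).eval y) ^ 2 := by
        congr 1
        exact Finset.sum_congr rfl fun i _ => by rw [hbD]
  -- build the contradiction polynomial
  set τ : Polynomial ℝ := ∑ i, (D1 (P i)) ^ 2 with hτ
  have hτdeg : τ.natDegree ≤ M * d + 2 :=
    natDegree_sum_le_of_forall_le _ _ fun i _ => by
      rw [natDegree_pow]
      have h1 := D1_natDegree_le (P i)
      have h2 := hPdeg i
      omega
  set Hp : Polynomial ℝ := X ^ 4 * q ^ (2 * M) - q ^ M * τ with hHp
  have hHple : ∀ y : ℝ, Hp.eval y ≤ 0 := by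
    intro y
    have hk := key y
    have h2 : q.eval y ^ (2 * M) = (q.eval y ^ M) ^ 2 := by rw [mul_comm, pow_mul]
    simp only [hHp, eval_sub, eval_mul, eval_pow, eval_X, hτ, eval_finset_sum]
    rw [h2]
    nlinarith [hk]
  have hlc : q.leadingCoeff ≠ 0 := leadingCoeff_ne_zero.2 hq0
  have hqMd : (q ^ (2 * M)).natDegree = 2 * M * d := by
    rw [natDegree_pow]
  have hcoeffHp : Hp.coeff (2 * M * d + 4) = q.leadingCoeff ^ (2 * M) := by
    rw [hHp, coeff_sub]
    have h1 : (X ^ 4 * q ^ (2 * M)).coeff (2 * M * d + 4) = q.leadingCoeff ^ (2 * M) := by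
      rw [coeff_X_pow_mul, ← hqMd, ← leadingCoeff, leadingCoeff_pow]
    have h2 : (q ^ M * τ).coeff (2 * M * d + 4) = 0 := by
      refine coeff_eq_zero_of_natDegree_lt (lt_of_le_of_lt natDegree_mul_le ?_)
      have h3 : (q ^ M).natDegree = M * d := by rw [natDegree_pow]
      have hMd : 2 * M * d = M * d + M * d := by ring
      omega
    rw [h1, h2, sub_zero]
  have hub : Hp.natDegree ≤ 2 * M * d + 4 := by
    rw [hHp]
    refine (natDegree_sub_le _ _).trans (max_le ?_ ?_)
    · refine natDegree_mul_le.trans ?_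
      rw [natDegree_X_pow, hqMd]
      omega
    · refine natDegree_mul_le.trans ?_
      have h3 : (q ^ M).natDegree = M * d := by rw [natDegree_pow]
      have hMd : 2 * M * d = M * d + M * d := by ring
      omega
  have hndHp : Hp.natDegree = 2 * M * d + 4 :=
    le_antisymm hub (le_natDegree_of_ne_zero (by rw [hcoeffHp]; exact pow_ne_zero _ hlc))
  have hlcHp : 0 < Hp.leadingCoeff := by
    rw [leadingCoeff, hndHp, hcoeffHp, mul_comm, pow_mul]
    exact pow_two_pos_of_ne_zero (pow_ne_zero _ hlc)
  have hdegHp : 0 < Hp.degree := by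
    rw [← natDegree_pos_iff_degree_pos, hndHp]
    omega
  obtain ⟨y, hy⟩ :=
    ((Polynomial.tendsto_atTop_of_leadingCoeff_nonneg Hp hdegHp hlcHp.le).eventually_gt_atTop
      0).exists
  exact absurd (hHple y) (not_le.2 hy)

theorem stmt_14 :
    -- f is strictly positive on S = [-1,1] × ℝ
    (∀ x y : ℝ, -1 ≤ x → x ≤ 1 →
      0 < Polynomial.eval₂ (Polynomial.evalRingHom x) y fEx) ∧
    -- 4/3 - X² belongs to M(g₁)
    QuadMod1 gEx (C (Polynomial.C (4 / 3 : ℝ) - X ^ 2)) ∧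
    -- but no q^M · f is in M(g₁)
    (∀ q : Polynomial ℝ, 0 < q.natDegree → (∀ y : ℝ, 0 < q.eval y) →
      ∀ M : ℕ, ¬ QuadMod1 gEx ((q.map Polynomial.C) ^ M * fEx)) := by
  exact ⟨part1, part2, part3⟩
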